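/- arXiv:1110.0023 — 2 statements merged into one kernel-verified Lean document; each statement's English description precedes it below -/
import Mathlib

section
/- Let P be a Horn monotone-constraint program and M a supported model of P. If P is tight on M, then M = Can(P,M), hence M is a stable model of P. -/
universe u

/-- A constraint `A = (X, C)`: domain `X` and a family `C` of subsets of `X`. -/
structure Constraint (α : Type u) where
  dom : Set α
  sat : Set (Set α)
  sat_sub : ∀ Y ∈ sat, Y ⊆ dom

/-- `M ⊨ A` iff `M ∩ Dom(A) ∈ C`. -/
def Constraint.Sat {α : Type u} (M : Set α) (A : Constraint α) : Prop :=
  M ∩ A.dom ∈ A.sat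

/-- A constraint is monotone if its satisfying family is closed under supersets
within the domain. -/
def Constraint.Mono {α : Type u} (A : Constraint α) : Prop :=
  ∀ W Y : Set α, W ∈ A.sat → W ⊆ Y → Y ⊆ A.dom → Y ∈ A.sat

/-- A rule `A ← A₁,…,A_k, not(A_{k+1}),…,not(A_m)`. -/
structure Rule (α : Type u) where
  head : Constraint α
  pos : Set (Constraint α)
  neg : Set (Constraint α)

/-- A constraint program is a set of rules. -/
abbrev Program (α : Type u) := Set (Rule α)

def Rule.Horn {α : Type u} (r : Rule α) : Prop := r.neg = ∅

def Rule.Mono {α : Type u} (r : Rule α) : Prop :=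
  r.head.Mono ∧ (∀ A ∈ r.pos, A.Mono) ∧ (∀ A ∈ r.neg, A.Mono)

def Program.Horn {α : Type u} (P : Program α) : Prop := ∀ r ∈ P, r.Horn

def Program.Mono {α : Type u} (P : Program α) : Prop := ∀ r ∈ P, r.Mono

/-- `M` satisfies the body of `r`. -/
def Rule.BodySat {α : Type u} (M : Set α) (r : Rule α) : Prop :=
  (∀ A ∈ r.pos, Constraint.Sat M A) ∧ (∀ A ∈ r.neg, ¬ Constraint.Sat M A)

/-- `P(M)`: the set of `M`-applicable rules of `P`. -/
def Program.app {α : Type u} (P : Program α) (M : Set α) : Program α :=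
  {r ∈ P | r.BodySat M}

/-- `hset(r) = Dom(hd(r))`. -/
def Rule.hset {α : Type u} (r : Rule α) : Set α := r.head.dom

/-- `hset(P)`: union of the headsets of rules of `P`. -/
def Program.hset {α : Type u} (P : Program α) : Set α := ⋃ r ∈ P, r.hset

def Rule.atoms {α : Type u} (r : Rule α) : Set α :=
  r.head.dom ∪ (⋃ A ∈ r.pos, A.dom) ∪ (⋃ A ∈ r.neg, A.dom)

/-- `At(P)`: atoms occurring in domains of constraints of `P`. -/
def Program.atoms {α : Type u} (P : Program α) : Set α := ⋃ r ∈ P, r.atoms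

/-- `M` is a model of `P`. -/
def Program.IsModel {α : Type u} (P : Program α) (M : Set α) : Prop :=
  ∀ r ∈ P, r.BodySat M → Constraint.Sat M r.head

/-- `M` is a supported model of `P`. -/
def Program.Supported {α : Type u} (P : Program α) (M : Set α) : Prop :=
  P.IsModel M ∧ M ⊆ (P.app M).hset

/-- The nondeterministic one-step provability operator `T_P^nd`. -/
def Program.Tnd {α : Type u} (P : Program α) (M : Set α) : Set (Set α) :=
  {M' | M' ⊆ (P.app M).hset ∧ ∀ r ∈ P.app M, Constraint.Sat M' r.head}

/-- A `P`-computation: a transfinite sequence starting at `∅`, increasing, with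
each successor step nondeterministically one-step provable, continuous at limits. -/
structure PComputation {α : Type u} (P : Program α) where
  X : Ordinal.{u} → Set α
  zero : X 0 = ∅
  incr : ∀ o, X o ⊆ X (o + 1)
  step : ∀ o, X (o + 1) ∈ P.Tnd (X o)
  limit : ∀ o : Ordinal.{u}, Order.IsSuccLimit o → X o = ⋃ β < o, X β

/-- The result `R_t` of a computation. -/
def PComputation.result {α : Type u} {P : Program α} (t : PComputation P) : Set α :=
  ⋃ o, t.X o

/-- `M` is a derivable model of `P`: the result of some `P`-computation. -/
def Program.Derivable {α : Type u} (P : Program α) (M : Set α) : Prop :=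
  ∃ t : PComputation P, t.result = M

/-- The canonical sequence `t^{P,M}`: `X₀ = ∅`, `X_{β+1} = hset(P(X_β)) ∩ M`,
unions at limits. -/
noncomputable def canSeq {α : Type u} (P : Program α) (M : Set α) (o : Ordinal.{u}) :
    Set α :=
  Ordinal.limitRecOn o ∅ (fun _ ih => (P.app ih).hset ∩ M)
    (fun o _ ih => ⋃ β : Ordinal.{u}, ⋃ h : β < o, ih β h)

/-- `Can(P,M)`: the result of the canonical computation. -/
noncomputable def Can {α : Type u} (P : Program α) (M : Set α) : Set α :=
  ⋃ o, canSeq P M o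

/-- The reduct of a single rule: drop negated literals. -/
def Rule.pos_part {α : Type u} (r : Rule α) : Rule α := ⟨r.head, r.pos, ∅⟩

/-- The reduct `P^M`. -/
def Program.reduct {α : Type u} (P : Program α) (M : Set α) : Program α :=
  {r' | ∃ r ∈ P, (∀ A ∈ r.neg, ¬ Constraint.Sat M A) ∧ r' = r.pos_part}

/-- `M` is a stable model of `P`: a derivable model of the reduct `P^M`. -/
def Program.Stable {α : Type u} (P : Program α) (M : Set α) : Prop :=
  (P.reduct M).Derivable M

/-- `N ⊨_M P`: `N` is an `M`-maximal model of the Horn program `P`. -/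
def Program.MMax {α : Type u} (P : Program α) (M N : Set α) : Prop :=
  N ⊆ M ∧ P.IsModel N ∧ M ∩ (P.app N).hset ⊆ N

/-- `(X,Y)` is an SE-model of `P`. -/
def Program.SE {α : Type u} (P : Program α) (X Y : Set α) : Prop :=
  X ⊆ Y ∧ P.IsModel Y ∧ (P.reduct Y).MMax Y X

/-- `(X,Y)` is a UE-model of `P`. -/
def Program.UE {α : Type u} (P : Program α) (X Y : Set α) : Prop :=
  P.SE X Y ∧ ∀ X', P.SE X' Y → X ⊆ X' → X = X' ∨ X' = Y

/-- Strong equivalence of monotone-constraint programs. -/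
def StrongEq {α : Type u} (P Q : Program α) : Prop :=
  ∀ R : Program α, R.Mono → ∀ M : Set α, (P ∪ R).Stable M ↔ (Q ∪ R).Stable M

/-- The rule `(D,{D}) ←`. -/
def factRule {α : Type u} (D : Set α) : Rule α :=
  ⟨⟨D, {D}, fun Y hY => by simp only [Set.mem_singleton_iff] at hY; simp [hY]⟩, ∅, ∅⟩

/-- Uniform equivalence of monotone-constraint programs. -/
def UnifEq {α : Type u} (P Q : Program α) : Prop :=
  ∀ D : Set α, ∀ M : Set α,
    (P ∪ {factRule D}).Stable M ↔ (Q ∪ {factRule D}).Stable M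

/-- `P` is tight on `M`. -/
def Program.Tight {α : Type u} (P : Program α) (M : Set α) : Prop :=
  ∃ lam : α → Ordinal.{u}, ∀ r ∈ P.app M, ∀ x ∈ M ∩ r.hset,
    ∀ a ∈ M ∩ (⋃ A ∈ r.pos, A.dom), lam a < lam x



section FagesAux

variable {α : Type u}

lemma canSeq_zero (P : Program α) (M : Set α) : canSeq P M 0 = ∅ :=
  Ordinal.limitRecOn_zero _ _ _

lemma canSeq_succ (P : Program α) (M : Set α) (o : Ordinal.{u}) :
    canSeq P M (o + 1) = (P.app (canSeq P M o)).hset ∩ M := by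
  rw [canSeq, Ordinal.add_one_eq_succ, Ordinal.limitRecOn_succ]
  rfl

lemma canSeq_limit (P : Program α) (M : Set α) {o : Ordinal.{u}} (h : Order.IsSuccLimit o) :
    canSeq P M o = ⋃ β : Ordinal.{u}, ⋃ _ : β < o, canSeq P M β := by
  rw [canSeq, Ordinal.limitRecOn_limit _ _ _ _ h]
  rfl

lemma canSeq_subset_M (P : Program α) (M : Set α) (o : Ordinal.{u}) :
    canSeq P M o ⊆ M := by
  induction o using Ordinal.induction with
  | h o ih =>
    rcases Ordinal.zero_or_succ_or_isSuccLimit o with h0 | ⟨a, ha⟩ | hl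
    · rw [h0, canSeq_zero]; exact Set.empty_subset M
    · rw [← ha, ← Ordinal.add_one_eq_succ, canSeq_succ]
      exact Set.inter_subset_right
    · rw [canSeq_limit P M hl]
      exact Set.iUnion₂_subset fun β hβ => ih β hβ

lemma app_mono {P : Program α} (hHorn : P.Horn) (hMono : P.Mono) {N N' : Set α}
    (h : N ⊆ N') : P.app N ⊆ P.app N' := by
  rintro r ⟨hrP, hpos, hneg⟩
  refine ⟨hrP, fun A hA => ?_, ?_⟩
  · exact (hMono r hrP).2.1 A hA _ _ (hpos A hA)
      (Set.inter_subset_inter_left _ h) Set.inter_subset_right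
  · rw [hHorn r hrP]; intro A hA; exact absurd hA (Set.notMem_empty A)

lemma hset_mono {P Q : Program α} (h : P ⊆ Q) : P.hset ⊆ Q.hset :=
  Set.iUnion₂_subset fun r hr => Set.subset_iUnion₂_of_subset r (h hr) subset_rfl

lemma canSeq_mono {P : Program α} (hHorn : P.Horn) (hMono : P.Mono) (M : Set α) :
    ∀ γ β : Ordinal.{u}, β ≤ γ → canSeq P M β ⊆ canSeq P M γ := by
  intro γ
  induction γ using Ordinal.induction with
  | h γ ih =>
    intro β hβ
    rcases Ordinal.zero_or_succ_or_isSuccLimit γ with h0 | ⟨δ, hδ⟩ | hl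
    · subst h0; rw [nonpos_iff_eq_zero] at hβ; subst hβ; exact subset_rfl
    · subst hδ
      rcases eq_or_lt_of_le hβ with heq | hlt
      · subst heq; exact subset_rfl
      have hβδ : β ≤ δ := Order.lt_succ_iff.mp hlt
      have h1 : canSeq P M β ⊆ canSeq P M δ := by
        rcases eq_or_lt_of_le hβδ with h | h
        · subst h; exact subset_rfl
        · exact ih δ (Order.lt_succ δ) β hβδ
      refine h1.trans ?_
      have hgoal : canSeq P M δ ⊆ (P.app (canSeq P M δ)).hset ∩ M := by
        rcases Ordinal.zero_or_succ_or_isSuccLimit δ with d0 | ⟨ε, hε⟩ | dl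
        · subst d0; rw [canSeq_zero]; exact Set.empty_subset _
        · subst hε
          have hsucc : canSeq P M (Order.succ ε) = (P.app (canSeq P M ε)).hset ∩ M := by
            rw [← Ordinal.add_one_eq_succ, canSeq_succ]
          nth_rewrite 1 [hsucc]
          refine Set.inter_subset_inter_left _ (hset_mono (app_mono hHorn hMono ?_))
          exact ih (Order.succ ε) (Order.lt_succ _) ε (Order.le_succ ε)
        · intro x hx
          rw [canSeq_limit P M dl] at hx
          obtain ⟨ε, hε, hxε⟩ := Set.mem_iUnion₂.mp hx
          have h2 : canSeq P M ε ⊆ canSeq P M (ε + 1) :=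
            ih (ε + 1) ((Ordinal.add_one_eq_succ ε ▸ dl.succ_lt hε).trans (Order.lt_succ δ))
              ε (Ordinal.add_one_eq_succ ε ▸ Order.le_succ ε)
          have hx1 : x ∈ (P.app (canSeq P M ε)).hset ∩ M := by
            rw [← canSeq_succ]; exact h2 hxε
          exact ⟨hset_mono (app_mono hHorn hMono (ih δ (Order.lt_succ δ) ε hε.le)) hx1.1,
            hx1.2⟩
      refine hgoal.trans ?_
      rw [← Ordinal.add_one_eq_succ, canSeq_succ]
    · rcases eq_or_lt_of_le hβ with heq | hlt
      · subst heq; exact subset_rfl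
      rw [canSeq_limit P M hl]
      exact Set.subset_iUnion₂_of_subset β hlt subset_rfl

lemma M_subset_Can {P : Program α} (hHorn : P.Horn) (hMono : P.Mono) {M : Set α}
    (hSupp : P.Supported M) (hTight : P.Tight M) : M ⊆ Can P M := by
  obtain ⟨lam, hlam⟩ := hTight
  have key : ∀ β : Ordinal.{u}, ∀ x ∈ M, lam x < β → x ∈ canSeq P M β := by
    intro β
    induction β using Ordinal.induction with
    | h β ih =>
      intro x hxM hxβ
      rcases Ordinal.zero_or_succ_or_isSuccLimit β with h0 | ⟨δ, hδ⟩ | hl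
      · subst h0; exact absurd hxβ (not_lt_zero' (a := lam x))
      · subst hδ
        have hxδ : lam x ≤ δ := Order.lt_succ_iff.mp hxβ
        obtain ⟨r, hr, hxr⟩ : ∃ r ∈ P.app M, x ∈ r.hset := by
          have := hSupp.2 hxM
          simpa [Program.hset, Set.mem_iUnion₂] using this
        have hrapp : r ∈ P.app (canSeq P M δ) := by
          refine ⟨hr.1, fun A hA => ?_, ?_⟩
          · have heq : canSeq P M δ ∩ A.dom = M ∩ A.dom := by
              apply Set.Subset.antisymm
              · exact Set.inter_subset_inter_left _ (canSeq_subset_M P M δ)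
              · rintro a ⟨haM, haA⟩
                refine ⟨ih δ (Order.lt_succ δ) a haM ?_, haA⟩
                have : lam a < lam x := hlam r hr x ⟨hxM, hxr⟩ a
                  ⟨haM, Set.mem_iUnion₂.mpr ⟨A, hA, haA⟩⟩
                exact lt_of_lt_of_le this hxδ
            show canSeq P M δ ∩ A.dom ∈ A.sat
            rw [heq]
            exact hr.2.1 A hA
          · rw [hHorn r hr.1]; intro A hA; exact absurd hA (Set.notMem_empty A)
        rw [← Ordinal.add_one_eq_succ, canSeq_succ]
        refine ⟨?_, hxM⟩
        exact Set.mem_iUnion₂.mpr ⟨r, hrapp, hxr⟩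
      · have h1 : lam x + 1 < β := by
          rw [Ordinal.add_one_eq_succ]; exact hl.succ_lt hxβ
        rw [canSeq_limit P M hl]
        exact Set.mem_iUnion₂.mpr ⟨lam x + 1, h1,
          ih _ h1 x hxM (Ordinal.add_one_eq_succ (lam x) ▸ Order.lt_succ _)⟩
  intro x hxM
  exact Set.mem_iUnion.mpr ⟨lam x + 1, key _ x hxM
    (Ordinal.add_one_eq_succ (lam x) ▸ Order.lt_succ _)⟩

lemma reduct_eq_self {P : Program α} (hHorn : P.Horn) (M : Set α) :
    P.reduct M = P := by
  ext r
  constructor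
  · rintro ⟨r', hr', -, rfl⟩
    have : r'.pos_part = r' := by
      have hn := hHorn r' hr'
      cases r'; simp_all [Rule.pos_part, Rule.Horn]
    rw [this]; exact hr'
  · intro hr
    refine ⟨r, hr, ?_, ?_⟩
    · rw [hHorn r hr]; intro A hA; exact absurd hA (Set.notMem_empty A)
    · have hn := hHorn r hr
      cases r; simp_all [Rule.pos_part, Rule.Horn]

end FagesAux

/-- Fages Lemma, Horn case: a supported model of a tight Horn
monotone-constraint program equals `Can(P,M)`, hence is stable. -/
theorem fages_horn {α : Type u} (P : Program α) (hHorn : P.Horn) (hMono : P.Mono)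
    (M : Set α) (hSupp : P.Supported M) (hTight : P.Tight M) :
    M = Can P M ∧ P.Stable M := by
  have hMC : M = Can P M := by
    apply Set.Subset.antisymm
    · exact M_subset_Can hHorn hMono hSupp hTight
    · exact Set.iUnion_subset fun o => canSeq_subset_M P M o
  refine ⟨hMC, ?_⟩
  rw [Program.Stable, reduct_eq_self hHorn]
  refine ⟨⟨canSeq P M, canSeq_zero P M, ?_, ?_, ?_⟩, ?_⟩
  · intro o
    exact canSeq_mono hHorn hMono M (o + 1) o
      (Ordinal.add_one_eq_succ o ▸ Order.le_succ o)
  · intro o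
    rw [canSeq_succ]
    refine ⟨Set.inter_subset_left, fun r hr => ?_⟩
    have hrM : r ∈ P.app M := app_mono hHorn hMono (canSeq_subset_M P M o) hr
    have hhead : Constraint.Sat M r.head := hSupp.1 r hrM.1 hrM.2
    show ((P.app (canSeq P M o)).hset ∩ M) ∩ r.head.dom ∈ r.head.sat
    have heq : ((P.app (canSeq P M o)).hset ∩ M) ∩ r.head.dom = M ∩ r.head.dom := by
      apply Set.Subset.antisymm
      · exact Set.inter_subset_inter_left _ Set.inter_subset_right
      · rintro a ⟨haM, haD⟩
        exact ⟨⟨Set.mem_iUnion₂.mpr ⟨r, hr, haD⟩, haM⟩, haD⟩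
    rw [heq]
    exact hhead
  · intro o ho
    exact canSeq_limit P M ho
  · show (⋃ o, canSeq P M o) = M
    exact (hMC ▸ rfl : Can P M = M)
end

section
/- Let P be a monotone-constraint program. A set M ⊆ At(P) is a supported model of P if and only if M is a model of the completion Comp(P). -/
universe u

/-- Formulas of the logic `PL^mc`: Boolean combinations (with infinitary
conjunction and disjunction) of monotone constraints. -/
inductive PLmc (α : Type u) : Type (u + 1)
  | con : Constraint α → PLmc α
  | not : PLmc α → PLmc α
  | imp : PLmc α → PLmc α → PLmc α
  | iAnd : (ι : Type u) → (ι → PLmc α) → PLmc α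
  | iOr : (ι : Type u) → (ι → PLmc α) → PLmc α

/-- Satisfaction of `PL^mc` formulas. -/
def PLmc.Sat {α : Type u} (M : Set α) : PLmc α → Prop
  | .con A => Constraint.Sat M A
  | .not f => ¬ PLmc.Sat M f
  | .imp f g => PLmc.Sat M f → PLmc.Sat M g
  | .iAnd _ f => ∀ i, PLmc.Sat M (f i)
  | .iOr _ f => ∃ i, PLmc.Sat M (f i)

/-- `[bd(r)]^∧`: the conjunction of body literals of `r`. -/
def Rule.bodyF {α : Type u} (r : Rule α) : PLmc α :=
  .iAnd (↥r.pos ⊕ ↥r.neg)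
    (fun i => Sum.rec (fun A => .con A.1) (fun A => .not (.con A.1)) i)

/-- The constraint `C(x) = ({x},{{x}})` representing the atom `x`. -/
def atomC {α : Type u} (x : α) : Constraint α :=
  ⟨{x}, {{x}}, fun Y hY => by simp only [Set.mem_singleton_iff] at hY; simp [hY]⟩

/-- The completion `Comp(P)` of a monotone-constraint program `P`. -/
def Comp {α : Type u} (P : Program α) : Set (PLmc α) :=
  {f | ∃ r ∈ P, f = .imp r.bodyF (.con r.head)} ∪
  {f | ∃ x ∈ P.atoms, f = .imp (.con (atomC x))
        (.iOr {r : Rule α // r ∈ P ∧ x ∈ r.hset} (fun r => r.1.bodyF))}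

lemma bodyF_sat_iff {α : Type u} (M : Set α) (r : Rule α) :
    PLmc.Sat M r.bodyF ↔ r.BodySat M := by
  constructor
  · intro h
    exact ⟨fun A hA => h (Sum.inl ⟨A, hA⟩), fun A hA => h (Sum.inr ⟨A, hA⟩)⟩
  · rintro ⟨h1, h2⟩ (⟨A, hA⟩ | ⟨A, hA⟩)
    · exact h1 A hA
    · exact h2 A hA

lemma atomC_sat_iff {α : Type u} (M : Set α) (x : α) :
    Constraint.Sat M (atomC x) ↔ x ∈ M := by
  unfold Constraint.Sat atomC
  simp only [Set.mem_singleton_iff]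
  constructor
  · intro h
    have : x ∈ M ∩ ({x} : Set α) := h.symm ▸ Set.mem_singleton x
    exact this.1
  · intro h
    ext y; simp only [Set.mem_inter_iff, Set.mem_singleton_iff]
    exact ⟨fun ⟨_, hy⟩ => hy, fun hy => ⟨hy ▸ h, hy⟩⟩

/-- `M ⊆ At(P)` is a supported model of `P` iff `M` is a model of
the completion `Comp(P)`. -/
theorem supported_iff_completion {α : Type u} (P : Program α) (hMono : P.Mono)
    (M : Set α) (hsub : M ⊆ P.atoms) :
    P.Supported M ↔ ∀ f ∈ Comp P, PLmc.Sat M f := by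
  constructor
  · rintro ⟨hmod, hsupp⟩ f hf
    rcases hf with ⟨r, hr, rfl⟩ | ⟨x, hx, rfl⟩
    · intro hb
      exact hmod r hr ((bodyF_sat_iff M r).1 hb)
    · intro hx'
      have hxM : x ∈ M := (atomC_sat_iff M x).1 hx'
      have := hsupp hxM
      simp only [Program.hset, Set.mem_iUnion] at this
      obtain ⟨r, hr, hxr⟩ := this
      obtain ⟨hrP, hrB⟩ := hr
      exact ⟨⟨r, hrP, hxr⟩, (bodyF_sat_iff M r).2 hrB⟩
  · intro h
    constructor
    · intro r hr hb
      exact h _ (Or.inl ⟨r, hr, rfl⟩) ((bodyF_sat_iff M r).2 hb)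
    · intro x hxM
      have hx := h _ (Or.inr ⟨x, hsub hxM, rfl⟩) ((atomC_sat_iff M x).2 hxM)
      obtain ⟨⟨r, hrP, hxr⟩, hb⟩ := hx
      simp only [Program.hset, Set.mem_iUnion]
      exact ⟨r, ⟨hrP, (bodyF_sat_iff M r).1 hb⟩, hxr⟩
end
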